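/- For all 2π-periodic C² functions u, v : ℝ → ℝ one has ⟨Ã₂u, v⟩_{−1,w} = −(1/2)·∫₀^{2π} u₀(θ)·v₀(θ)/w(θ) dθ. In particular Ã₂ is symmetric and negative semi-definite with respect to ⟨·,·⟩_{−1,w}. -/

import Mathlib

noncomputable section

open MeasureTheory

/-- `Ψ₀(x)`: the non-disordered fixed-point function. -/
def Psi0 (x : ℝ) : ℝ :=
  (∫ θ in (0:ℝ)..(2 * Real.pi), Real.cos θ * Real.exp (x * Real.cos θ)) /
    (∫ θ in (0:ℝ)..(2 * Real.pi), Real.exp (x * Real.cos θ))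

/-- The potential `Φ(θ) = −2Kr₀·cos θ`. -/
def Phi (K r₀ θ : ℝ) : ℝ := -2 * K * r₀ * Real.cos θ

/-- The weight `w(θ) = exp(−Φ(θ))/∫₀^{2π} exp(−Φ)`. -/
def w (K r₀ θ : ℝ) : ℝ :=
  Real.exp (-Phi K r₀ θ) / (∫ u in (0:ℝ)..(2 * Real.pi), Real.exp (-Phi K r₀ u))

/-- The Fokker–Planck operator `Ã₂v = (1/2)v'' + (Kr₀ sin(θ) v)'`. -/
def A2 (K r₀ : ℝ) (v : ℝ → ℝ) (θ : ℝ) : ℝ :=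
  (1 / 2) * deriv (deriv v) θ + deriv (fun u => K * r₀ * Real.sin u * v u) θ

/-- The `2π`-periodic primitive of a zero-mean `a`, normalized so that
`∫₀^{2π} 𝒜/k = 0` for the weight `k`. -/
def prim (k a : ℝ → ℝ) (θ : ℝ) : ℝ :=
  (∫ u in (0:ℝ)..θ, a u) -
    (∫ s in (0:ℝ)..(2 * Real.pi), (∫ u in (0:ℝ)..s, a u) / k s) /
      (∫ s in (0:ℝ)..(2 * Real.pi), 1 / k s)

/-- `v₀ = v − (∫₀^{2π} v)·w`, the zero-mean part of `v`. -/
def vz (K r₀ : ℝ) (v : ℝ → ℝ) (θ : ℝ) : ℝ :=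
  v θ - (∫ u in (0:ℝ)..(2 * Real.pi), v u) * w K r₀ θ

/-- The weighted Sobolev inner product `⟨u, v⟩_{−1,w}`. -/
def pairW (K r₀ : ℝ) (u v : ℝ → ℝ) : ℝ :=
  (∫ θ in (0:ℝ)..(2 * Real.pi), u θ) * (∫ θ in (0:ℝ)..(2 * Real.pi), v θ) +
    ∫ θ in (0:ℝ)..(2 * Real.pi),
      prim (w K r₀) (vz K r₀ u) θ * prim (w K r₀) (vz K r₀ v) θ / w K r₀ θ


namespace Stmt11Aux

open intervalIntegral

lemma twopi_pos : (0:ℝ) < 2 * Real.pi := by positivity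

lemma exp_negPhi_continuous (K r₀ : ℝ) : Continuous fun s => Real.exp (-Phi K r₀ s) := by
  unfold Phi; fun_prop

lemma Z_pos (K r₀ : ℝ) : 0 < ∫ s in (0:ℝ)..(2 * Real.pi), Real.exp (-Phi K r₀ s) :=
  intervalIntegral_pos_of_pos ((exp_negPhi_continuous K r₀).intervalIntegrable _ _)
    (fun _ => Real.exp_pos _) twopi_pos

lemma w_pos (K r₀ θ : ℝ) : 0 < w K r₀ θ :=
  div_pos (Real.exp_pos _) (Z_pos K r₀)

lemma w_ne (K r₀ θ : ℝ) : w K r₀ θ ≠ 0 := (w_pos K r₀ θ).ne'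

lemma w_continuous (K r₀ : ℝ) : Continuous (w K r₀) :=
  (exp_negPhi_continuous K r₀).div_const _

lemma div_w_continuous (K r₀ : ℝ) {f : ℝ → ℝ} (hf : Continuous f) :
    Continuous fun s => f s / w K r₀ s :=
  hf.div (w_continuous K r₀) (w_ne K r₀)

lemma w_periodic (K r₀ : ℝ) : Function.Periodic (w K r₀) (2 * Real.pi) := by
  intro x; unfold w Phi; rw [Real.cos_add_two_pi]

lemma w_hasDerivAt (K r₀ θ : ℝ) :
    HasDerivAt (w K r₀) (-(2 * K * r₀ * Real.sin θ) * w K r₀ θ) θ := by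
  have hc : HasDerivAt (fun θ => -Phi K r₀ θ) (2 * K * r₀ * -Real.sin θ) θ := by
    simpa [Phi, neg_mul, neg_neg, mul_comm, mul_assoc] using
      ((Real.hasDerivAt_cos θ).const_mul (2 * K * r₀))
  have h : HasDerivAt (w K r₀)
      (Real.exp (-Phi K r₀ θ) * (2 * K * r₀ * -Real.sin θ) /
        (∫ s in (0:ℝ)..(2 * Real.pi), Real.exp (-Phi K r₀ s))) θ := (hc.exp).div_const _
  convert h using 1
  unfold w; ring

lemma integral_w (K r₀ : ℝ) : (∫ θ in (0:ℝ)..(2 * Real.pi), w K r₀ θ) = 1 := by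
  unfold w
  rw [intervalIntegral.integral_div, div_self (Z_pos K r₀).ne']

lemma inv_w_pos (K r₀ : ℝ) : 0 < ∫ s in (0:ℝ)..(2 * Real.pi), 1 / w K r₀ s :=
  intervalIntegral_pos_of_pos
    ((div_w_continuous K r₀ continuous_const).intervalIntegrable _ _)
    (fun x => by have := w_pos K r₀ x; positivity) twopi_pos

lemma periodic_deriv {f : ℝ → ℝ} {c : ℝ} (hf : Function.Periodic f c) :
    Function.Periodic (deriv f) c := by
  intro x
  have h : (fun y => f (y + c)) = f := funext hf
  rw [← deriv_comp_add_const, h]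

/-- the antiderivative `G = (1/2)u' + Kr₀ sin·u` of `A2 u`. -/
def G (K r₀ : ℝ) (u : ℝ → ℝ) (θ : ℝ) : ℝ :=
  (1 / 2) * deriv u θ + K * r₀ * Real.sin θ * u θ

lemma deriv_contDiff {u : ℝ → ℝ} (hu : ContDiff ℝ 2 u) : ContDiff ℝ 1 (deriv u) := by
  have h : ContDiff ℝ (1+1) u := by exact_mod_cast hu
  exact (contDiff_succ_iff_deriv.mp h).2.2

lemma u_diff {u : ℝ → ℝ} (hu : ContDiff ℝ 2 u) : Differentiable ℝ u :=
  hu.differentiable (by norm_num)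

lemma hasDerivAt_prod (K r₀ : ℝ) {u : ℝ → ℝ} (hu : ContDiff ℝ 2 u) (θ : ℝ) :
    HasDerivAt (fun s => K * r₀ * Real.sin s * u s)
      (K * r₀ * Real.cos θ * u θ + K * r₀ * Real.sin θ * deriv u θ) θ := by
  have h := ((Real.hasDerivAt_sin θ).const_mul (K * r₀)).mul (u_diff hu θ).hasDerivAt
  exact h

lemma hasDerivAt_G (K r₀ : ℝ) {u : ℝ → ℝ} (hu : ContDiff ℝ 2 u) (θ : ℝ) :
    HasDerivAt (G K r₀ u) (A2 K r₀ u θ) θ := by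
  have h1 : HasDerivAt (fun s => (1/2 : ℝ) * deriv u s) ((1/2) * deriv (deriv u) θ) θ :=
    (((deriv_contDiff hu).differentiable one_ne_zero) θ).hasDerivAt.const_mul _
  have h2 := hasDerivAt_prod K r₀ hu θ
  have h3 := h1.add h2
  have he : A2 K r₀ u θ = (1/2) * deriv (deriv u) θ +
      (K * r₀ * Real.cos θ * u θ + K * r₀ * Real.sin θ * deriv u θ) := by
    unfold A2; rw [h2.deriv]
  rw [he]
  exact h3

lemma A2_continuous (K r₀ : ℝ) {u : ℝ → ℝ} (hu : ContDiff ℝ 2 u) :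
    Continuous (A2 K r₀ u) := by
  have h : A2 K r₀ u = fun θ => (1/2) * deriv (deriv u) θ +
      (K * r₀ * Real.cos θ * u θ + K * r₀ * Real.sin θ * deriv u θ) := by
    funext θ; unfold A2; rw [(hasDerivAt_prod K r₀ hu θ).deriv]
  rw [h]
  have hc1 : Continuous (deriv (deriv u)) := (contDiff_one_iff_deriv.mp (deriv_contDiff hu)).2
  have hc2 : Continuous (deriv u) := ((deriv_contDiff hu).differentiable one_ne_zero).continuous
  have hc3 : Continuous u := hu.continuous
  fun_prop

lemma G_continuous (K r₀ : ℝ) {u : ℝ → ℝ} (hu : ContDiff ℝ 2 u) :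
    Continuous (G K r₀ u) := by
  have hc2 : Continuous (deriv u) := ((deriv_contDiff hu).differentiable one_ne_zero).continuous
  have hc3 : Continuous u := hu.continuous
  unfold G; fun_prop

lemma integral_A2 (K r₀ : ℝ) {u : ℝ → ℝ} (hu : ContDiff ℝ 2 u) (b : ℝ) :
    (∫ θ in (0:ℝ)..b, A2 K r₀ u θ) = G K r₀ u b - G K r₀ u 0 :=
  integral_eq_sub_of_hasDerivAt (fun θ _ => hasDerivAt_G K r₀ hu θ)
    ((A2_continuous K r₀ hu).intervalIntegrable _ _)

lemma G_periodic (K r₀ : ℝ) {u : ℝ → ℝ}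
    (huper : Function.Periodic u (2 * Real.pi)) :
    Function.Periodic (G K r₀ u) (2 * Real.pi) := by
  intro x
  unfold G
  rw [periodic_deriv huper x, Real.sin_add_two_pi, huper x]

lemma integral_A2_twopi (K r₀ : ℝ) {u : ℝ → ℝ} (hu : ContDiff ℝ 2 u)
    (huper : Function.Periodic u (2 * Real.pi)) :
    (∫ θ in (0:ℝ)..(2 * Real.pi), A2 K r₀ u θ) = 0 := by
  rw [integral_A2 K r₀ hu]
  have h := G_periodic K r₀ huper 0
  rw [zero_add] at h
  rw [h, sub_self]

/-- derivative of `u/w`. -/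
lemma hasDerivAt_div_w (K r₀ : ℝ) {u : ℝ → ℝ} (hu : ContDiff ℝ 2 u) (θ : ℝ) :
    HasDerivAt (fun s => u s / w K r₀ s) (2 * G K r₀ u θ / w K r₀ θ) θ := by
  have h := (u_diff hu θ).hasDerivAt.div (w_hasDerivAt K r₀ θ) (w_ne K r₀ θ)
  refine h.congr_deriv ?_
  have hw := w_ne K r₀ θ
  rw [div_eq_div_iff (pow_ne_zero 2 hw) hw]
  unfold G
  ring

lemma integral_G_div_w (K r₀ : ℝ) {u : ℝ → ℝ} (hu : ContDiff ℝ 2 u)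
    (huper : Function.Periodic u (2 * Real.pi)) :
    (∫ θ in (0:ℝ)..(2 * Real.pi), G K r₀ u θ / w K r₀ θ) = 0 := by
  have hcont : Continuous fun θ => 2 * G K r₀ u θ / w K r₀ θ :=
    div_w_continuous K r₀ (continuous_const.mul (G_continuous K r₀ hu))
  have h : (∫ θ in (0:ℝ)..(2 * Real.pi), 2 * G K r₀ u θ / w K r₀ θ)
      = u (2 * Real.pi) / w K r₀ (2 * Real.pi) - u 0 / w K r₀ 0 :=
    integral_eq_sub_of_hasDerivAt (fun θ _ => hasDerivAt_div_w K r₀ hu θ)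
      (hcont.intervalIntegrable _ _)
  have hper : u (2 * Real.pi) / w K r₀ (2 * Real.pi) = u 0 / w K r₀ 0 := by
    have h1 := huper 0; have h2 := w_periodic K r₀ 0
    rw [zero_add] at h1 h2; rw [h1, h2]
  rw [hper, sub_self] at h
  have h2 : (∫ θ in (0:ℝ)..(2 * Real.pi), G K r₀ u θ / w K r₀ θ)
      = (1/2) * ∫ θ in (0:ℝ)..(2 * Real.pi), 2 * G K r₀ u θ / w K r₀ θ := by
    rw [← intervalIntegral.integral_const_mul]
    congr 1; funext θ; ring
  rw [h2, h, mul_zero]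

lemma vz_A2 (K r₀ : ℝ) {u : ℝ → ℝ} (hu : ContDiff ℝ 2 u)
    (huper : Function.Periodic u (2 * Real.pi)) :
    vz K r₀ (fun θ => A2 K r₀ u θ) = A2 K r₀ u := by
  funext θ
  unfold vz
  rw [integral_A2_twopi K r₀ hu huper]
  ring

/-- The key identity: the normalized primitive of `vz (A2 u)` is exactly `G`. -/
lemma prim_A2 (K r₀ : ℝ) {u : ℝ → ℝ} (hu : ContDiff ℝ 2 u)
    (huper : Function.Periodic u (2 * Real.pi)) :
    prim (w K r₀) (vz K r₀ (fun θ => A2 K r₀ u θ)) = G K r₀ u := by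
  funext θ
  rw [vz_A2 K r₀ hu huper]
  unfold prim
  rw [integral_A2 K r₀ hu]
  have hinner : (∫ s in (0:ℝ)..(2 * Real.pi), (∫ t in (0:ℝ)..s, A2 K r₀ u t) / w K r₀ s)
      = - (G K r₀ u 0 * ∫ s in (0:ℝ)..(2 * Real.pi), 1 / w K r₀ s) := by
    have hrw : ∀ s ∈ Set.uIcc (0:ℝ) (2 * Real.pi),
        (∫ t in (0:ℝ)..s, A2 K r₀ u t) / w K r₀ s
        = G K r₀ u s / w K r₀ s - G K r₀ u 0 * (1 / w K r₀ s) := by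
      intro s _; rw [integral_A2 K r₀ hu, sub_div, mul_one_div]
    rw [intervalIntegral.integral_congr hrw]
    rw [intervalIntegral.integral_sub (f := fun x => G K r₀ u x / w K r₀ x)
      (g := fun x => G K r₀ u 0 * (1 / w K r₀ x))
      ((div_w_continuous K r₀ (G_continuous K r₀ hu)).intervalIntegrable _ _)
      ((continuous_const.mul
        (div_w_continuous K r₀ continuous_const)).intervalIntegrable _ _)]
    rw [integral_G_div_w K r₀ hu huper, intervalIntegral.integral_const_mul, zero_sub]
  rw [hinner]
  have hI := (inv_w_pos K r₀).ne'
  rw [neg_div, mul_div_assoc, div_self hI, mul_one]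
  ring

end Stmt11Aux

open Stmt11Aux intervalIntegral in
/-- Main identity: `pairW (A2 u) v = -(1/2)∫ u₀ v₀ / w`. -/
lemma pairW_A2 (K r₀ : ℝ) (u v : ℝ → ℝ) (hu : ContDiff ℝ 2 u) (hv : ContDiff ℝ 2 v)
    (huper : Function.Periodic u (2 * Real.pi))
    (hvper : Function.Periodic v (2 * Real.pi)) :
    pairW K r₀ (fun θ => A2 K r₀ u θ) v =
      -(1 / 2) * ∫ θ in (0:ℝ)..(2 * Real.pi), vz K r₀ u θ * vz K r₀ v θ / w K r₀ θ := by
  have hwc := w_continuous K r₀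
  have hwne := w_ne K r₀
  have hvzc : Continuous (vz K r₀ v) := by
    have h := hv.continuous; unfold vz; fun_prop
  set V := prim (w K r₀) (vz K r₀ v) with hV
  have hVder : ∀ θ : ℝ, HasDerivAt V (vz K r₀ v θ) θ := by
    intro θ
    have h : HasDerivAt (fun t => ∫ x in (0:ℝ)..t, vz K r₀ v x) (vz K r₀ v θ) θ :=
      integral_hasDerivAt_right (hvzc.intervalIntegrable _ _)
        hvzc.stronglyMeasurable.stronglyMeasurableAtFilter hvzc.continuousAt
    exact h.sub_const _
  have hVd : Differentiable ℝ V := fun θ => (hVder θ).differentiableAt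
  have hVcont : Continuous V := hVd.continuous
  have hvz_int : (∫ θ in (0:ℝ)..(2 * Real.pi), vz K r₀ v θ) = 0 := by
    unfold vz
    rw [intervalIntegral.integral_sub (f := fun θ => v θ)
      (g := fun θ => (∫ u in (0:ℝ)..(2 * Real.pi), v u) * w K r₀ θ) (hv.continuous.intervalIntegrable _ _)
      ((continuous_const.mul hwc).intervalIntegrable _ _),
      intervalIntegral.integral_const_mul, integral_w, mul_one, sub_self]
  have hVper : V (2 * Real.pi) = V 0 := by
    rw [hV]; unfold prim
    rw [hvz_int, intervalIntegral.integral_same]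
  set f := fun θ => vz K r₀ u θ / w K r₀ θ with hf
  have hfeq : f = fun θ => u θ / w K r₀ θ - (∫ s in (0:ℝ)..(2 * Real.pi), u s) := by
    funext θ
    show vz K r₀ u θ / w K r₀ θ = _
    unfold vz
    rw [sub_div, mul_div_assoc, div_self (hwne θ), mul_one]
  have hfder : ∀ θ : ℝ, HasDerivAt f (2 * G K r₀ u θ / w K r₀ θ) θ := by
    intro θ; rw [hfeq]
    exact (hasDerivAt_div_w K r₀ hu θ).sub_const _
  have hfper : f (2 * Real.pi) = f 0 := by
    rw [hfeq]
    have h1 := huper 0; have h2 := w_periodic K r₀ 0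
    rw [zero_add] at h1 h2
    simp [h1, h2]
  have hGder_cont : Continuous fun θ => 2 * G K r₀ u θ / w K r₀ θ :=
    div_w_continuous K r₀ (continuous_const.mul (G_continuous K r₀ hu))
  have hibp : (∫ θ in (0:ℝ)..(2 * Real.pi), V θ * (2 * G K r₀ u θ / w K r₀ θ))
      = V (2 * Real.pi) * f (2 * Real.pi) - V 0 * f 0 -
        ∫ θ in (0:ℝ)..(2 * Real.pi), vz K r₀ v θ * f θ :=
    integral_mul_deriv_eq_deriv_mul (fun θ _ => hVder θ) (fun θ _ => hfder θ)
      (hvzc.intervalIntegrable _ _) (hGder_cont.intervalIntegrable _ _)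
  rw [hVper, hfper, sub_self, zero_sub] at hibp
  unfold pairW
  rw [integral_A2_twopi K r₀ hu huper, zero_mul, zero_add, prim_A2 K r₀ hu huper, ← hV]
  have hrw : (∫ θ in (0:ℝ)..(2 * Real.pi), G K r₀ u θ * V θ / w K r₀ θ)
      = (1/2) * ∫ θ in (0:ℝ)..(2 * Real.pi), V θ * (2 * G K r₀ u θ / w K r₀ θ) := by
    rw [← intervalIntegral.integral_const_mul]
    congr 1; funext θ; ring
  rw [hrw, hibp]
  have hrw2 : (∫ θ in (0:ℝ)..(2 * Real.pi), vz K r₀ v θ * f θ)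
      = ∫ θ in (0:ℝ)..(2 * Real.pi), vz K r₀ u θ * vz K r₀ v θ / w K r₀ θ := by
    congr 1; funext θ; rw [hf]; ring
  rw [hrw2]; ring

open Stmt11Aux in
/-- Integration-by-parts identity for the Fokker–Planck operator in the weighted Sobolev
inner product; in particular the operator is symmetric and negative semi-definite. -/
theorem stmt11 (K r₀ : ℝ) (hK : 1 < K) (hr₀ : 0 < r₀) (hfix : r₀ = Psi0 (2 * K * r₀))
    (u v : ℝ → ℝ) (hu : ContDiff ℝ 2 u) (hv : ContDiff ℝ 2 v)
    (huper : Function.Periodic u (2 * Real.pi))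
    (hvper : Function.Periodic v (2 * Real.pi)) :
    pairW K r₀ (fun θ => A2 K r₀ u θ) v =
        -(1 / 2) * ∫ θ in (0:ℝ)..(2 * Real.pi), vz K r₀ u θ * vz K r₀ v θ / w K r₀ θ ∧
      pairW K r₀ (fun θ => A2 K r₀ u θ) v = pairW K r₀ u (fun θ => A2 K r₀ v θ) ∧
      pairW K r₀ (fun θ => A2 K r₀ v θ) v ≤ 0 := by
  have h1 := pairW_A2 K r₀ u v hu hv huper hvper
  have h2 := pairW_A2 K r₀ v u hv hu hvper huper
  have h3 := pairW_A2 K r₀ v v hv hv hvper hvper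
  have hcomm : pairW K r₀ u (fun θ => A2 K r₀ v θ) = pairW K r₀ (fun θ => A2 K r₀ v θ) u := by
    unfold pairW
    rw [mul_comm]
    congr 1
    apply intervalIntegral.integral_congr
    intro θ _
    ring
  refine ⟨h1, ?_, ?_⟩
  · rw [h1, hcomm, h2]
    congr 1
    apply intervalIntegral.integral_congr
    intro θ _
    ring
  · rw [h3]
    have hnn : 0 ≤ ∫ θ in (0:ℝ)..(2 * Real.pi), vz K r₀ v θ * vz K r₀ v θ / w K r₀ θ := by
      apply intervalIntegral.integral_nonneg twopi_pos.le
      intro x _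
      exact div_nonneg (mul_self_nonneg _) (w_pos K r₀ x).le
    nlinarith

end
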